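/- Let A be a central hyperplane arrangement. If Z ∈ L(A) is a modular element, then the principal ideal ⟨Z⟩ is a modular ideal of L(A). -/

import Mathlib

open Polynomial
open scoped Classical Pointwise

namespace HypArr

variable {K V : Type*} [Field K] [AddCommGroup V] [Module K V] [FiniteDimensional K V]

/-- `A` is an affine hyperplane arrangement: a finite set of affine hyperplanes,
i.e. nonempty affine subspaces of codimension one. -/
def IsArrangement (A : Finset (AffineSubspace K V)) : Prop :=
  ∀ H ∈ A, H ≠ ⊥ ∧ Module.finrank K V = Module.finrank K H.direction + 1

/-- The intersection poset `L(A)`: all nonempty intersections of subfamilies of `A`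
(the empty intersection being the whole space `⊤`).  The order of `L(A)` is *reverse*
inclusion, so `X ≤ Y` in `L(A)` corresponds to `Y ≤ X` as affine subspaces; the
minimal element `0̂` of `L(A)` is the whole space `⊤`. -/
noncomputable def poset (A : Finset (AffineSubspace K V)) : Finset (AffineSubspace K V) :=
  (A.powerset.image fun S => S.inf id).filter (· ≠ ⊥)

/-- The rank of an element of `L(A)`: its codimension in `V`. -/
noncomputable def rk (X : AffineSubspace K V) : ℕ :=
  Module.finrank K V - Module.finrank K X.direction

/-- The rank `r(A)` of the arrangement: the maximal rank of an element of `L(A)`. -/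
noncomputable def rank (A : Finset (AffineSubspace K V)) : ℕ := (poset A).sup rk

/-- An ideal of `L(A)` (with respect to the reverse-inclusion order of `L(A)`):
a downward closed subset of `L(A)`. -/
def IsIdeal (A I : Finset (AffineSubspace K V)) : Prop :=
  I ⊆ poset A ∧ ∀ X ∈ I, ∀ Y ∈ poset A, X ≤ Y → Y ∈ I

/-- The principal ideal `⟨X⟩ = {Y ∈ L(A) : Y ≤ X}` of `L(A)` (in the
reverse-inclusion order of `L(A)`, i.e. `{Y ∈ L(A) : X ⊆ Y}`). -/
noncomputable def principal (A : Finset (AffineSubspace K V)) (X : AffineSubspace K V) :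
    Finset (AffineSubspace K V) :=
  (poset A).filter fun Y => X ≤ Y

/-- The meet `X ∧ Y` in `L(A)`: the greatest element of `L(A)` below both `X` and `Y`
(in the reverse-inclusion order); in terms of affine subspaces it is the smallest
element of `L(A)` containing both `X` and `Y`.  In particular `X ∧ Y = 0̂` iff
`lmeet A X Y = ⊤`. -/
noncomputable def lmeet (A : Finset (AffineSubspace K V)) (X Y : AffineSubspace K V) :
    AffineSubspace K V :=
  sInf {W | W ∈ poset A ∧ X ≤ W ∧ Y ≤ W}

/-- An ideal decomposition `{I_1, …, I_m}` of `L(A)`: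
(I1) for every `X ∈ L(A) \ {0̂}` some `I j ∩ ⟨X⟩` is a nontrivial principal ideal;
(I2) joins `X_1 ∨ ⋯ ∨ X_m` (i.e. intersections) of members of the ideals exist;
(I3) these joins satisfy the rank condition. -/
def IsIdealDecomposition (A : Finset (AffineSubspace K V)) {m : ℕ}
    (I : Fin m → Finset (AffineSubspace K V)) : Prop :=
  (∀ i, IsIdeal A (I i)) ∧
  (∀ X ∈ poset A, X ≠ ⊤ →
    ∃ j, ∃ Z ∈ poset A, Z ≠ ⊤ ∧ I j ∩ principal A X = principal A Z) ∧
  (∀ f : Fin m → AffineSubspace K V, (∀ i, f i ∈ I i) →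
    Finset.univ.inf f ≠ (⊥ : AffineSubspace K V)) ∧
  (∀ f : Fin m → AffineSubspace K V, (∀ i, f i ∈ I i) →
    rk (Finset.univ.inf f) = ∑ i, rk (f i))

/-- The meet-complement `I^c = {Y ∈ L(A) : Y ∧ X = 0̂ for all X ∈ I}`. -/
noncomputable def meetCompl (A I : Finset (AffineSubspace K V)) : Finset (AffineSubspace K V) :=
  (poset A).filter fun Y => ∀ X ∈ I, lmeet A X Y = ⊤

/-- An ideal `I` is modular if `{I, I^c}` is an ideal decomposition of `L(A)`. -/
def IsModularIdeal (A I : Finset (AffineSubspace K V)) : Prop :=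
  IsIdealDecomposition A ![I, meetCompl A I]

/-- `μ` is the Möbius function `μ(0̂, ·)` of the finite intersection poset `P`
(ordered by reverse inclusion, with minimal element the maximal affine subspace in `P`):
the sum of `μ` over an interval `[0̂, X]` is `1` if `X = 0̂` and `0` otherwise. -/
def IsMobiusOn (P : Finset (AffineSubspace K V)) (μ : AffineSubspace K V → ℤ) : Prop :=
  ∀ X ∈ P, ∑ Z ∈ P.filter (fun Z => X ≤ Z), μ Z = if ∀ Z ∈ P, Z ≤ X then 1 else 0

/-- The characteristic polynomial `χ(t) = ∑_{X ∈ P} μ(X) t^{dim X}` of an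
intersection poset `P` with Möbius function `μ`. -/
noncomputable def charPolyOn (P : Finset (AffineSubspace K V)) (μ : AffineSubspace K V → ℤ) :
    Polynomial ℤ :=
  ∑ X ∈ P, C (μ X) * Polynomial.X ^ (Module.finrank K X.direction)

/-- The characteristic polynomial `χ̃(I, t) = ∑_{X ∈ I} μ(X) t^{r(I) - r(X)}` of an ideal. -/
noncomputable def tildeChi (μ : AffineSubspace K V → ℤ) (I : Finset (AffineSubspace K V)) :
    Polynomial ℤ :=
  ∑ X ∈ I, C (μ X) * Polynomial.X ^ (I.sup rk - rk X)

/-- A central arrangement: the intersection of all hyperplanes is nonempty. -/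
def IsCentral (A : Finset (AffineSubspace K V)) : Prop := A.inf id ≠ ⊥

/-- A modular element `Z ∈ L(A)`: `r(Z) + r(X) = r(Z ∧ X) + r(Z ∨ X)` for all `X ∈ L(A)`
(the join `Z ∨ X` being the intersection `Z ⊓ X` of affine subspaces). -/
def IsModularElement (A : Finset (AffineSubspace K V)) (Z : AffineSubspace K V) : Prop :=
  Z ∈ poset A ∧ ∀ X ∈ poset A, rk Z + rk X = rk (lmeet A Z X) + rk (Z ⊓ X)

/-- The intersection poset of the restriction `B^W = {H ∩ W : H ∈ B, H ∩ W ≠ ∅}`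
of the arrangement `B` to the affine subspace `W`, realized as a finset of affine
subspaces of the ambient space (with minimal element `W`). -/
noncomputable def tracePoset (B : Finset (AffineSubspace K V)) (W : AffineSubspace K V) :
    Finset (AffineSubspace K V) :=
  (((B.filter fun H => H ⊓ W ≠ ⊥).image fun H => H ⊓ W).powerset.image
      fun S => W ⊓ S.inf id).filter (· ≠ ⊥)

/-- A modular subarrangement `B ⊆ A`: `L(B)`, viewed as a subposet of `L(A)`,
is a modular ideal of `L(A)`. -/
def IsModularSub (A B : Finset (AffineSubspace K V)) : Prop :=
  B ⊆ A ∧ IsModularIdeal A (poset B)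

end HypArr

namespace HypArr


section Helpers

set_option linter.unusedSectionVars false
set_option linter.unusedVariables false
variable {K V : Type*} [Field K] [AddCommGroup V] [Module K V] [FiniteDimensional K V]
variable {A : Finset (AffineSubspace K V)}

lemma mem_poset_iff {X : AffineSubspace K V} :
    X ∈ poset A ↔ (∃ S ⊆ A, S.inf id = X) ∧ X ≠ ⊥ := by
  classical
  unfold poset
  simp only [Finset.mem_filter, Finset.mem_image, Finset.mem_powerset]

lemma top_mem_poset : (⊤ : AffineSubspace K V) ∈ poset A := by
  refine mem_poset_iff.2 ⟨⟨∅, by simp, by simp⟩, ?_⟩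
  intro h
  have : (0 : V) ∈ (⊥ : AffineSubspace K V) := h ▸ AffineSubspace.mem_top K V 0
  exact AffineSubspace.notMem_bot K V (0 : V) this

lemma center_le_of_mem_poset {X : AffineSubspace K V} (hX : X ∈ poset A) :
    A.inf id ≤ X := by
  obtain ⟨⟨S, hS, rfl⟩, -⟩ := mem_poset_iff.1 hX
  exact Finset.inf_mono hS

lemma ne_bot_of_mem_poset {X : AffineSubspace K V} (hX : X ∈ poset A) : X ≠ ⊥ :=
  (mem_poset_iff.1 hX).2

lemma inf_mem_poset (hc : IsCentral A) {X Y : AffineSubspace K V}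
    (hX : X ∈ poset A) (hY : Y ∈ poset A) : X ⊓ Y ∈ poset A := by
  classical
  obtain ⟨⟨S, hS, rfl⟩, -⟩ := mem_poset_iff.1 hX
  obtain ⟨⟨T, hT, rfl⟩, -⟩ := mem_poset_iff.1 hY
  refine mem_poset_iff.2 ⟨⟨S ∪ T, Finset.union_subset hS hT, Finset.inf_union⟩, ?_⟩
  intro h
  exact hc (le_bot_iff.1 (h ▸ le_inf (Finset.inf_mono hS) (Finset.inf_mono hT)))

lemma finsetInf_mem_poset (hc : IsCentral A) {T : Finset (AffineSubspace K V)}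
    (hT : T ⊆ poset A) : T.inf id ∈ poset A := by
  classical
  induction T using Finset.induction_on with
  | empty => simpa using top_mem_poset
  | @insert a s ha ih =>
      rw [Finset.inf_insert]
      exact inf_mem_poset hc (hT (Finset.mem_insert_self a s))
        (ih fun x hx => hT (Finset.mem_insert_of_mem hx))

lemma lmeet_eq_finsetInf (X Y : AffineSubspace K V) :
    lmeet A X Y = ((poset A).filter fun W => X ≤ W ∧ Y ≤ W).inf id := by
  classical
  rw [lmeet, Finset.inf_id_eq_sInf]
  congr 1
  ext W
  simp [Finset.mem_filter, and_assoc]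

lemma lmeet_mem_poset (hc : IsCentral A) (X Y : AffineSubspace K V) :
    lmeet A X Y ∈ poset A := by
  classical
  rw [lmeet_eq_finsetInf]
  exact finsetInf_mem_poset hc (Finset.filter_subset _ _)

lemma le_lmeet_left (X Y : AffineSubspace K V) : X ≤ lmeet A X Y :=
  le_sInf fun W hW => hW.2.1

lemma le_lmeet_right (X Y : AffineSubspace K V) : Y ≤ lmeet A X Y :=
  le_sInf fun W hW => hW.2.2

lemma lmeet_le {X Y W : AffineSubspace K V} (hW : W ∈ poset A)
    (h1 : X ≤ W) (h2 : Y ≤ W) : lmeet A X Y ≤ W :=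
  sInf_le ⟨hW, h1, h2⟩

lemma lmeet_mono {X X' Y Y' : AffineSubspace K V} (hX : X ≤ X') (hY : Y ≤ Y') :
    lmeet A X Y ≤ lmeet A X' Y' :=
  le_sInf fun W hW => sInf_le ⟨hW.1, hX.trans hW.2.1, hY.trans hW.2.2⟩

lemma rk_top : rk (⊤ : AffineSubspace K V) = 0 := by
  have h : (⊤ : AffineSubspace K V).direction = ⊤ := AffineSubspace.direction_top K V V
  rw [rk, h, finrank_top]
  exact Nat.sub_self _

lemma rk_antitone {X Y : AffineSubspace K V} (h : X ≤ Y) : rk Y ≤ rk X :=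
  Nat.sub_le_sub_left (Submodule.finrank_mono (AffineSubspace.direction_le h)) _

lemma rk_inf_le (hc : IsCentral A) {X Y : AffineSubspace K V}
    (hX : X ∈ poset A) (hY : Y ∈ poset A) : rk (X ⊓ Y) ≤ rk X + rk Y := by
  obtain ⟨p, hp⟩ := (AffineSubspace.nonempty_iff_ne_bot (A.inf id)).2 hc
  have hpX : p ∈ X := center_le_of_mem_poset hX hp
  have hpY : p ∈ Y := center_le_of_mem_poset hY hp
  have hdir : (X ⊓ Y).direction = X.direction ⊓ Y.direction :=
    AffineSubspace.direction_inf_of_mem hpX hpY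
  have hsum := Submodule.finrank_sup_add_finrank_inf_eq X.direction Y.direction
  have h1 := Submodule.finrank_le (X.direction ⊔ Y.direction)
  have h2 := Submodule.finrank_le X.direction
  have h3 := Submodule.finrank_le Y.direction
  have hd2 : Module.finrank K (X ⊓ Y).direction =
      Module.finrank K ↥(X.direction ⊓ Y.direction) := by rw [hdir]
  unfold rk
  rw [hd2]
  omega

/-- Key rank computation for (I3). -/
lemma rk_inf_eq (hc : IsCentral A) {Z X Y : AffineSubspace K V}
    (hZ : IsModularElement A Z) (hX : X ∈ poset A) (hZX : Z ≤ X)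
    (hY : Y ∈ poset A) (hZY : lmeet A Z Y = ⊤) :
    rk (X ⊓ Y) = rk X + rk Y := by
  have hXY : X ⊓ Y ∈ poset A := inf_mem_poset hc hX hY
  -- rk (Z ⊓ Y) = rk Z + rk Y
  have h1 := hZ.2 Y hY
  rw [hZY, rk_top, zero_add] at h1
  -- modularity at X ⊓ Y
  have h2 := hZ.2 (X ⊓ Y) hXY
  have hZinf : Z ⊓ (X ⊓ Y) = Z ⊓ Y := by
    rw [← inf_assoc, inf_eq_left.2 hZX]
  rw [hZinf, ← h1] at h2
  -- the lmeet term is contained in X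
  set L := lmeet A Z (X ⊓ Y) with hL
  have hLX : L ≤ X := lmeet_le hX hZX inf_le_left
  have hXL : rk X ≤ rk L := rk_antitone hLX
  have hle : rk (X ⊓ Y) ≤ rk X + rk Y := rk_inf_le hc hX hY
  omega

lemma inf_univ_two {α : Type*} [SemilatticeInf α] [OrderTop α] (f : Fin 2 → α) :
    Finset.univ.inf f = f 0 ⊓ f 1 := by
  have : (Finset.univ : Finset (Fin 2)) = {0, 1} := by decide
  rw [this, Finset.inf_insert, Finset.inf_singleton]

end Helpers

/-- **Proposition.** In a central arrangement, the principal ideal generated by a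
modular element is a modular ideal. -/
theorem principal_isModularIdeal_of_modularElement
    {K V : Type*} [Field K] [AddCommGroup V] [Module K V] [FiniteDimensional K V]
    (A : Finset (AffineSubspace K V)) (hA : IsArrangement A) (hc : IsCentral A)
    (Z : AffineSubspace K V) (hZ : IsModularElement A Z) :
    IsModularIdeal A (principal A Z) := by
  classical
  obtain ⟨hZmem, hZmod⟩ := hZ
  have hZZ : Z ∈ principal A Z := Finset.mem_filter.2 ⟨hZmem, le_rfl⟩
  refine ⟨?_, ?_, ?_, ?_⟩
  · -- (I0) both are ideals
    intro i
    fin_cases i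
    · refine ⟨Finset.filter_subset _ _, ?_⟩
      intro X hX Y hY hXY
      exact Finset.mem_filter.2 ⟨hY, (Finset.mem_filter.1 hX).2.trans hXY⟩
    · refine ⟨Finset.filter_subset _ _, ?_⟩
      intro X hX Y hY hXY
      refine Finset.mem_filter.2 ⟨hY, fun W hW => ?_⟩
      have h1 : lmeet A W X ≤ lmeet A W Y := lmeet_mono le_rfl hXY
      rw [(Finset.mem_filter.1 hX).2 W hW] at h1
      exact top_le_iff.1 h1
  · -- (I1)
    intro X hX hXtop
    by_cases h : lmeet A Z X = ⊤
    · refine ⟨1, X, hX, hXtop, ?_⟩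
      show meetCompl A (principal A Z) ∩ principal A X = principal A X
      apply Finset.ext
      intro Y
      constructor
      · exact fun hY => (Finset.mem_inter.1 hY).2
      · intro hY
        obtain ⟨hYp, hXY⟩ := Finset.mem_filter.1 hY
        refine Finset.mem_inter.2 ⟨Finset.mem_filter.2 ⟨hYp, fun W hW => ?_⟩, hY⟩
        have h1 : lmeet A Z X ≤ lmeet A W Y :=
          lmeet_mono (Finset.mem_filter.1 hW).2 hXY
        rw [h] at h1
        exact top_le_iff.1 h1
    · refine ⟨0, lmeet A Z X, lmeet_mem_poset hc Z X, h, ?_⟩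
      show principal A Z ∩ principal A X = principal A (lmeet A Z X)
      apply Finset.ext
      intro Y
      constructor
      · intro hY
        obtain ⟨h1, h2⟩ := Finset.mem_inter.1 hY
        obtain ⟨hYp, hZY⟩ := Finset.mem_filter.1 h1
        exact Finset.mem_filter.2 ⟨hYp, lmeet_le hYp hZY (Finset.mem_filter.1 h2).2⟩
      · intro hY
        obtain ⟨hYp, hLY⟩ := Finset.mem_filter.1 hY
        exact Finset.mem_inter.2
          ⟨Finset.mem_filter.2 ⟨hYp, (le_lmeet_left Z X).trans hLY⟩,
           Finset.mem_filter.2 ⟨hYp, (le_lmeet_right Z X).trans hLY⟩⟩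
  · -- (I2)
    intro f hf
    have h0 : f 0 ∈ principal A Z := hf 0
    have h1 : f 1 ∈ meetCompl A (principal A Z) := hf 1
    rw [inf_univ_two]
    intro hbot
    have hle : A.inf id ≤ f 0 ⊓ f 1 :=
      le_inf (center_le_of_mem_poset (Finset.mem_filter.1 h0).1)
        (center_le_of_mem_poset (Finset.mem_filter.1 h1).1)
    rw [hbot, le_bot_iff] at hle
    exact hc hle
  · -- (I3)
    intro f hf
    have h0 : f 0 ∈ principal A Z := hf 0
    have h1 : f 1 ∈ meetCompl A (principal A Z) := hf 1
    rw [inf_univ_two, Fin.sum_univ_two]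
    exact rk_inf_eq hc ⟨hZmem, hZmod⟩ (Finset.mem_filter.1 h0).1
      (Finset.mem_filter.1 h0).2 (Finset.mem_filter.1 h1).1
      ((Finset.mem_filter.1 h1).2 Z hZZ)

end HypArr
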